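/- In the setting of the abstract constraint problem (V Hilbert, a bounded coercive symmetric, L_1,…,L_N ∈ V* linearly independent), let u^{(k)} be the solution with data g = e_k (k-th standard basis vector), and define M_{lk} = a(u^{(k)}, u^{(l)}). Then M is symmetric positive definite. -/

import Mathlib

open MeasureTheory Real
open scoped RealInnerProductSpace ENNReal
noncomputable section
abbrev Euc (d : ℕ) := EuclideanSpace ℝ (Fin d)

structure MemH1 {d : ℕ} (Ω : Set (Euc d)) (u : Euc d → ℝ) : Prop where
  diffOn : DifferentiableOn ℝ u Ω
  memL2 : MemLp u 2 (volume.restrict Ω)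
  gradL2 : MemLp (fun x => ‖gradient u x‖) 2 (volume.restrict Ω)

structure MemH10 {d : ℕ} (Ω : Set (Euc d)) (u : Euc d → ℝ) : Prop extends MemH1 Ω u where
  zeroBoundary : ∀ x ∉ Ω, u x = 0
/-- Positive definiteness of the effective matrix M_{lk} = a(u⁽ᵏ⁾, u⁽ˡ⁾) built from
the constrained solutions u⁽ᵏ⁾ with unit data in the k-th constraint. -/
theorem stmt_19 {V : Type*} [NormedAddCommGroup V] [InnerProductSpace ℝ V]
    [CompleteSpace V] {N : ℕ}
    (a : V →ₗ[ℝ] V →ₗ[ℝ] ℝ)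
    (hsymm : ∀ u v, a u v = a v u)
    (hbdd : ∃ C > 0, ∀ u v, |a u v| ≤ C * ‖u‖ * ‖v‖)
    (hcoer : ∃ c > 0, ∀ v, c * ‖v‖ ^ 2 ≤ a v v)
    (L : Fin N → V →L[ℝ] ℝ) (hL : LinearIndependent ℝ L)
    (u : Fin N → V)
    (hsol : ∀ k, (∀ v, (∀ j, L j v = 0) → a (u k) v = 0) ∧
      ∀ j, L j (u k) = if j = k then (1 : ℝ) else 0) :
    let M : Matrix (Fin N) (Fin N) ℝ := Matrix.of fun l k => a (u k) (u l)
    M.IsSymm ∧ M.PosDef := by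
  intro M
  obtain ⟨c, hc, hcoer⟩ := hcoer
  have hMsymm : M.IsSymm := by
    ext l k
    simp [M, Matrix.transpose_apply, hsymm]
  refine ⟨hMsymm, Matrix.posDef_iff_dotProduct_mulVec.mpr ⟨?_, ?_⟩⟩
  · show M.conjTranspose = M
    rw [Matrix.conjTranspose]
    exact (Matrix.conjTranspose_eq_transpose_of_trivial M).trans hMsymm
  · intro x hx
    set w : V := (∑ k, x k • u k) with hw
    have hquad : dotProduct (star x) (M.mulVec x) = a w w := by
      simp only [hw, map_sum, _root_.map_smul, LinearMap.sum_apply, LinearMap.smul_apply,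
        dotProduct, Matrix.mulVec, star_trivial, smul_eq_mul, M, Matrix.of_apply]
      refine Finset.sum_congr rfl fun l _ => ?_
      congr 1
      exact Finset.sum_congr rfl fun k _ => mul_comm _ _
    have hwne : w ≠ 0 := by
      intro h0
      apply hx
      funext j
      have := congrArg (L j) h0
      simp only [hw, map_sum, _root_.map_smul, smul_eq_mul, (hsol _).2, map_zero] at this
      simpa [mul_ite, Finset.sum_ite_eq'] using this
    rw [hquad]
    have hwpos : 0 < ‖w‖ := norm_pos_iff.mpr hwne
    have h1 : 0 < c * ‖w‖ ^ 2 := by positivity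
    linarith [hcoer w]
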